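/- arXiv:1207.0909 — 2 statements merged into one kernel-verified Lean document; each statement's English description precedes it below -/
import Mathlib

section
/- For b ∈ (-1/2, 1/2) and z ∈ ℂ with z ∉ (ℤ + 1/2)·i, one has e^{2πbz}/cosh(πz) = -(1/π)·Σ_{r ∈ ℤ+1/2} e^{2πir(b+1/2)}/(z - ir), where the sum is over half-integers r and converges (as a symmetric limit). -/
open Complex Filter MeasureTheory intervalIntegral Set
open scoped Real FourierTransform

noncomputable section

namespace Stmt7Aux

lemma exp_sub_exp (θ : ℝ) :
    Complex.exp ((θ:ℂ) * I) - Complex.exp (-(θ:ℂ) * I) = 2 * (Real.sin θ : ℂ) * I := by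
  rw [Complex.exp_mul_I, Complex.exp_mul_I, Complex.cos_neg, Complex.sin_neg,
    Complex.ofReal_sin]
  ring

lemma sum_shift {M : Type*} [AddCommMonoid M] (N : ℕ) (f : ℤ → M) :
    ∑ n ∈ Finset.Icc (-(N:ℤ)) ((N:ℤ)-1), f n = ∑ k ∈ Finset.range (2*N), f ((k:ℤ) - N) := by
  apply Finset.sum_nbij' (i := fun n : ℤ => (n + N).toNat) (j := fun k : ℕ => (k:ℤ) - N)
  · intro a ha
    simp only [Finset.mem_Icc] at ha
    simp only [Finset.mem_range]
    omega
  · intro a ha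
    simp only [Finset.mem_range] at ha
    simp only [Finset.mem_Icc]
    omega
  · intro a ha
    simp only [Finset.mem_Icc] at ha
    omega
  · intro a ha
    simp only [Finset.mem_range] at ha
    omega
  · intro a ha
    simp only [Finset.mem_Icc] at ha
    congr 1
    omega

lemma cont_ce (c : ℂ) : Continuous fun u : ℝ => Complex.exp (c * u) :=
  Complex.continuous_exp.comp (continuous_const.mul Complex.continuous_ofReal)

lemma hasDerivAt_ce (c : ℂ) (u : ℝ) :
    HasDerivAt (fun v : ℝ => Complex.exp (c * v)) (c * Complex.exp (c * u)) u := by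
  have h1 : HasDerivAt (fun w : ℂ => Complex.exp (c * w)) (c * Complex.exp (c * u)) (u : ℂ) := by
    simpa [mul_comm, Function.comp_def] using
      ((Complex.hasDerivAt_exp (c * u)).comp (u:ℂ) ((hasDerivAt_id (u:ℂ)).const_mul c))
  exact h1.comp_ofReal

/-- the Dirichlet-type kernel -/
def ker (N : ℕ) (u : ℝ) : ℂ :=
  ∑ n ∈ Finset.Icc (-(N:ℤ)) ((N:ℤ)-1), Complex.exp (2*(π:ℂ)*I*((n:ℂ)+1/2)*(u:ℂ))

lemma ker_cont (N : ℕ) : Continuous (ker N) := by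
  apply continuous_finset_sum
  intro n _
  exact cont_ce (2*(π:ℂ)*I*((n:ℂ)+1/2))

def rho (z : ℂ) (u : ℝ) : ℂ :=
  Complex.exp (-2*(π:ℂ)*z*u) - (1/2+I*z)*Complex.exp ((π:ℂ)*I*u)
    - (1/2-I*z)*Complex.exp (-((π:ℂ)*I)*u)

def psi (z : ℂ) (u : ℝ) : ℂ := if u = 0 then 0 else rho z u / (Real.sin (π*u) : ℂ)

lemma sin_mul_ker (N : ℕ) (u : ℝ) :
    (Real.sin (π*u) : ℂ) * ker N u = (Real.sin (2*π*N*u) : ℂ) := by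
  set g : ℤ → ℂ := fun m => Complex.exp (2*(π:ℂ)*I*(m:ℂ)*(u:ℂ)) with hg
  have step : ∀ n : ℤ, (Real.sin (π*u) : ℂ) * Complex.exp (2*(π:ℂ)*I*((n:ℂ)+1/2)*(u:ℂ))
      = (g (n+1) - g n) / (2*I) := by
    intro n
    have h := exp_sub_exp (π*u)
    have hs : (Real.sin (π*u) : ℂ)
        = (Complex.exp ((↑(π*u):ℂ) * I) - Complex.exp (-(↑(π*u):ℂ) * I)) / (2*I) := by
      rw [h]
      field_simp
    rw [hs, div_mul_eq_mul_div, sub_mul, ← Complex.exp_add, ← Complex.exp_add]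
    congr 2
    · rw [hg]
      push_cast
      ring
    · rw [hg]
      push_cast
      ring
  rw [ker, Finset.mul_sum]
  rw [Finset.sum_congr rfl fun n _ => step n, ← Finset.sum_div,
    sum_shift N (fun m => g (m+1) - g m)]
  have tele : ∑ k ∈ Finset.range (2*N), (g ((k:ℤ) - N + 1) - g ((k:ℤ) - N))
      = g N - g (-N) := by
    have h := Finset.sum_range_sub (fun k : ℕ => g ((k:ℤ) - N)) (2*N)
    calc ∑ k ∈ Finset.range (2*N), (g ((k:ℤ) - N + 1) - g ((k:ℤ) - N))
        = ∑ k ∈ Finset.range (2*N),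
            ((fun k : ℕ => g ((k:ℤ) - N)) (k+1) - (fun k : ℕ => g ((k:ℤ) - N)) k) := by
          refine Finset.sum_congr rfl fun k _ => ?_
          simp only
          congr 2
          push_cast
          ring
      _ = g (((2*N : ℕ):ℤ) - N) - g (((0:ℕ):ℤ) - N) := h
      _ = g N - g (-N) := by congr 2 <;> push_cast <;> ring
  rw [tele]
  have h2 := exp_sub_exp (2*π*N*u)
  have hgN : g N = Complex.exp ((↑(2*π*N*u):ℂ) * I) := by
    simp only [hg]
    rw [show 2*(π:ℂ)*I*((((N:ℕ):ℤ)):ℂ)*(u:ℂ) = (↑(2*π*(N:ℝ)*u):ℂ) * I by push_cast; ring]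
  have hgN' : g (-N) = Complex.exp (-(↑(2*π*N*u):ℂ) * I) := by
    simp only [hg]
    rw [show 2*(π:ℂ)*I*(((-(N:ℕ):ℤ)):ℂ)*(u:ℂ) = -(↑(2*π*(N:ℝ)*u):ℂ) * I by push_cast; ring]
  rw [hgN, hgN', h2]
  field_simp

lemma integral_exp_int (x : ℝ) (k : ℤ) :
    (∫ u in (x-1)..x, Complex.exp (2*(π:ℂ)*I*(k:ℂ)*(u:ℂ))) = if k = 0 then 1 else 0 := by
  rcases eq_or_ne k 0 with hk | hk
  · subst hk
    simp only [Int.cast_zero, mul_zero, zero_mul, Complex.exp_zero, if_pos]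
    rw [intervalIntegral.integral_const]
    simp
  · have hc : (2*(π:ℂ)*I*(k:ℂ)) ≠ 0 := by
      apply mul_ne_zero
      apply mul_ne_zero
      apply mul_ne_zero two_ne_zero
      · exact Complex.ofReal_ne_zero.mpr Real.pi_ne_zero
      · exact Complex.I_ne_zero
      · exact Int.cast_ne_zero.mpr hk
    rw [integral_exp_mul_complex hc, if_neg hk]
    have h1 : Complex.exp (2*(π:ℂ)*I*(k:ℂ) * ((x:ℂ)-1))
        = Complex.exp (2*(π:ℂ)*I*(k:ℂ) * (x:ℂ)) * Complex.exp (((-k : ℤ) : ℂ) * (2*(π:ℂ)*I)) := by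
      rw [← Complex.exp_add]
      congr 1
      push_cast
      ring
    rw [Complex.ofReal_sub, Complex.ofReal_one, h1, Complex.exp_int_mul_two_pi_mul_I]
    simp

lemma integral_trig_ker (z : ℂ) (x : ℝ) (N : ℕ) (hN : 1 ≤ N) :
    (∫ u in (x-1)..x,
      ((1/2+I*z)*Complex.exp ((π:ℂ)*I*u) + (1/2-I*z)*Complex.exp (-((π:ℂ)*I)*u)) * ker N u)
      = 1 := by
  set A : ℂ := 1/2+I*z with hA
  set B : ℂ := 1/2-I*z with hB
  have per : ∀ (n:ℤ) (u:ℝ),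
      (A*Complex.exp ((π:ℂ)*I*u) + B*Complex.exp (-((π:ℂ)*I)*u))
          * Complex.exp (2*(π:ℂ)*I*((n:ℂ)+1/2)*u)
        = A * Complex.exp (2*(π:ℂ)*I*(((n+1:ℤ)):ℂ)*(u:ℂ))
          + B * Complex.exp (2*(π:ℂ)*I*((n:ℤ):ℂ)*(u:ℂ)) := by
    intro n u
    have e1 : (π:ℂ)*I*u + 2*(π:ℂ)*I*((n:ℂ)+1/2)*u = 2*(π:ℂ)*I*(((n+1:ℤ)):ℂ)*(u:ℂ) := by
      push_cast; ring
    have e2 : -((π:ℂ)*I)*u + 2*(π:ℂ)*I*((n:ℂ)+1/2)*u = 2*(π:ℂ)*I*((n:ℤ):ℂ)*(u:ℂ) := by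
      push_cast; ring
    rw [add_mul, mul_assoc A, mul_assoc B, ← Complex.exp_add, ← Complex.exp_add, e1, e2]
  have step1 : (∫ u in (x-1)..x,
      (A*Complex.exp ((π:ℂ)*I*u) + B*Complex.exp (-((π:ℂ)*I)*u)) * ker N u)
      = ∫ u in (x-1)..x, ∑ n ∈ Finset.Icc (-(N:ℤ)) ((N:ℤ)-1),
          (A * Complex.exp (2*(π:ℂ)*I*(((n+1:ℤ)):ℂ)*(u:ℂ))
            + B * Complex.exp (2*(π:ℂ)*I*((n:ℤ):ℂ)*(u:ℂ))) := by
    apply intervalIntegral.integral_congr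
    intro u _
    simp only [ker, Finset.mul_sum]
    exact Finset.sum_congr rfl fun n _ => per n u
  rw [step1, intervalIntegral.integral_finset_sum]
  swap
  · intro n _
    exact ((continuous_const.mul (cont_ce _)).add (continuous_const.mul (cont_ce _))).intervalIntegrable _ _
  have step2 : ∀ n ∈ Finset.Icc (-(N:ℤ)) ((N:ℤ)-1),
      (∫ u in (x-1)..x, (A * Complex.exp (2*(π:ℂ)*I*(((n+1:ℤ)):ℂ)*(u:ℂ))
          + B * Complex.exp (2*(π:ℂ)*I*((n:ℤ):ℂ)*(u:ℂ))))
        = A * (if n = -1 then (1:ℂ) else 0) + B * (if n = 0 then (1:ℂ) else 0) := by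
    intro n _
    rw [intervalIntegral.integral_add ((continuous_const.fun_mul (cont_ce _)).intervalIntegrable _ _)
        ((continuous_const.fun_mul (cont_ce _)).intervalIntegrable _ _),
      intervalIntegral.integral_const_mul, intervalIntegral.integral_const_mul,
      integral_exp_int, integral_exp_int]
    congr 2
    by_cases h : n = -1
    · simp [h]
    · rw [if_neg h, if_neg (by omega)]
  rw [Finset.sum_congr rfl step2, Finset.sum_add_distrib, ← Finset.mul_sum, ← Finset.mul_sum,
    Finset.sum_ite_eq' _ (-1 : ℤ) (fun _ => (1:ℂ)),
    Finset.sum_ite_eq' _ (0 : ℤ) (fun _ => (1:ℂ)),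
    if_pos (by simp only [Finset.mem_Icc]; omega : (-1:ℤ) ∈ Finset.Icc (-(N:ℤ)) ((N:ℤ)-1)),
    if_pos (by simp only [Finset.mem_Icc]; omega : (0:ℤ) ∈ Finset.Icc (-(N:ℤ)) ((N:ℤ)-1))]
  rw [hA, hB]
  ring

lemma continuousOn_psi (z : ℂ) {x : ℝ} (hx0 : 0 < x) (hx1 : x < 1) :
    ContinuousOn (psi z) (Icc (x-1) x) := by
  have hrho_cont : Continuous (rho z) := by
    unfold rho
    exact ((cont_ce _).sub (continuous_const.mul (cont_ce _))).sub
      (continuous_const.mul (cont_ce _))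
  have hrho0 : rho z 0 = 0 := by
    simp [rho]
    ring
  intro u hu
  simp only [mem_Icc] at hu
  rcases eq_or_ne u 0 with hu0 | hu0
  · -- continuity at 0
    subst hu0
    apply ContinuousAt.continuousWithinAt
    have hderiv : HasDerivAt (rho z) 0 0 := by
      have h1 := hasDerivAt_ce (-2*(π:ℂ)*z) 0
      have h2 := (hasDerivAt_ce ((π:ℂ)*I) 0).const_mul ((1:ℂ)/2+I*z)
      have h3 := (hasDerivAt_ce (-((π:ℂ)*I)) 0).const_mul ((1:ℂ)/2-I*z)
      have h := (h1.sub h2).sub h3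
      have hval : -2*(π:ℂ)*z * Complex.exp (-2*(π:ℂ)*z * ((0:ℝ):ℂ))
          - ((1:ℂ)/2+I*z) * ((π:ℂ)*I * Complex.exp ((π:ℂ)*I * ((0:ℝ):ℂ)))
          - ((1:ℂ)/2-I*z) * (-((π:ℂ)*I) * Complex.exp (-((π:ℂ)*I) * ((0:ℝ):ℂ))) = 0 := by
        simp only [Complex.ofReal_zero, mul_zero, Complex.exp_zero, mul_one]
        linear_combination (-2*(π:ℂ)*z) * Complex.I_sq
      rw [hval] at h
      exact h
    have hslope : Tendsto (fun u : ℝ => rho z u / u) (nhdsWithin 0 {(0:ℝ)}ᶜ) (nhds 0) := by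
      have := hasDerivAt_iff_tendsto_slope.mp hderiv
      apply this.congr
      intro v
      simp [slope, hrho0, Complex.real_smul, Complex.ofReal_inv, div_eq_inv_mul]
    have hsin_slope : Tendsto (fun u : ℝ => Real.sin (π*u) / u)
        (nhdsWithin 0 {(0:ℝ)}ᶜ) (nhds π) := by
      have hd : HasDerivAt (fun u : ℝ => Real.sin (π*u)) π 0 := by
        have := (Real.hasDerivAt_sin (π*(0:ℝ))).comp 0 ((hasDerivAt_id (0:ℝ)).const_mul π)
        simpa [Function.comp_def] using this
      have := hasDerivAt_iff_tendsto_slope.mp hd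
      apply this.congr
      intro v
      simp [slope, div_eq_inv_mul]
    have hquot : Tendsto (fun u : ℝ => u / Real.sin (π*u))
        (nhdsWithin 0 {(0:ℝ)}ᶜ) (nhds π⁻¹) := by
      have := hsin_slope.inv₀ Real.pi_ne_zero
      apply this.congr
      intro v
      rw [inv_div]
    have hprod : Tendsto (fun u : ℝ => (rho z u / u) * ((u / Real.sin (π*u) : ℝ) : ℂ))
        (nhdsWithin 0 {(0:ℝ)}ᶜ) (nhds 0) := by
      have h2 : Tendsto (fun u : ℝ => ((u / Real.sin (π*u) : ℝ) : ℂ))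
          (nhdsWithin 0 {(0:ℝ)}ᶜ) (nhds ((π⁻¹ : ℝ) : ℂ)) :=
        (Complex.continuous_ofReal.tendsto _).comp hquot
      simpa using hslope.mul h2
    have hpsi_eq : ∀ v : ℝ, v ≠ 0 →
        psi z v = (rho z v / v) * ((v / Real.sin (π*v) : ℝ) : ℂ) := by
      intro v hv
      rw [psi, if_neg hv, Complex.ofReal_div, div_mul_div_comm, mul_comm (rho z v) (v:ℂ),
        mul_comm ((v:ℝ):ℂ) ((Real.sin (π*v) : ℝ):ℂ)]
      rw [show ((v:ℝ):ℂ) * rho z v / (((Real.sin (π*v):ℝ):ℂ) * ((v:ℝ):ℂ))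
        = ((v:ℝ):ℂ) * rho z v / (((v:ℝ):ℂ) * ((Real.sin (π*v):ℝ):ℂ)) by rw [mul_comm ((Real.sin (π*v):ℝ):ℂ)]]
      rw [mul_div_mul_left _ _ (Complex.ofReal_ne_zero.mpr hv)]
    have htend : Tendsto (psi z) (nhdsWithin 0 {(0:ℝ)}ᶜ) (nhds 0) := by
      apply hprod.congr'
      filter_upwards [self_mem_nhdsWithin] with v hv
      exact (hpsi_eq v hv).symm
    have hpure : Tendsto (psi z) (pure (0:ℝ)) (nhds (0:ℂ)) := by
      rw [tendsto_pure_left]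
      intro s hs
      have h0 : psi z 0 = 0 := if_pos rfl
      rw [h0]
      exact mem_of_mem_nhds hs
    have : Tendsto (psi z) (nhds 0) (nhds 0) := by
      rw [← nhdsNE_sup_pure (0:ℝ)]
      exact Tendsto.sup htend hpure
    have h0 : psi z 0 = 0 := if_pos rfl
    rw [ContinuousAt, h0]
    exact this
  · apply ContinuousAt.continuousWithinAt
    have hsin : Real.sin (π*u) ≠ 0 := by
      have h1 : -π < π*u := by nlinarith [Real.pi_pos]
      have h2 : π*u < π := by nlinarith [Real.pi_pos]
      rw [ne_eq, Real.sin_eq_zero_iff_of_lt_of_lt h1 h2]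
      simp [Real.pi_ne_zero, hu0]
    have hca : ContinuousAt (fun v : ℝ => rho z v / ((Real.sin (π*v) : ℝ) : ℂ)) u := by
      apply ContinuousAt.div
      · exact hrho_cont.continuousAt
      · exact (Complex.continuous_ofReal.comp
          (Real.continuous_sin.comp (continuous_const.mul continuous_id))).continuousAt
      · exact Complex.ofReal_ne_zero.mpr hsin
    apply hca.congr
    filter_upwards [eventually_ne_nhds hu0] with v hv
    rw [psi, if_neg hv]

lemma tendsto_psi_sin (z : ℂ) {x : ℝ} (hx0 : 0 < x) (hx1 : x < 1) :
    Tendsto (fun N : ℕ => ∫ u in (x-1)..x, psi z u * (Real.sin (2*π*N*u) : ℂ))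
      atTop (nhds 0) := by
  have hle : x - 1 ≤ x := by linarith
  set g : ℝ → ℂ := (Ioc (x-1) x).indicator (psi z) with hg
  have hint : IntegrableOn (psi z) (Ioc (x-1) x) := by
    exact ((continuousOn_psi z hx0 hx1).integrableOn_Icc).mono_set Ioc_subset_Icc_self
  have hgint : Integrable g := hint.integrable_indicator measurableSet_Ioc
  have hF : ∀ w : ℝ, 𝓕 g w = ∫ u in (x-1)..x, Complex.exp (((-2*π*u*w : ℝ) : ℂ) * I) * psi z u := by
    intro w
    rw [Real.fourier_real_eq_integral_exp_smul]
    rw [show (∫ v : ℝ, Complex.exp (((-2*π*v*w : ℝ):ℂ) * I) • g v)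
        = ∫ v : ℝ, (Ioc (x-1) x).indicator
            (fun u => Complex.exp (((-2*π*u*w : ℝ):ℂ) * I) • psi z u) v from
      integral_congr_ae (Filter.Eventually.of_forall fun v => by
        by_cases hv : v ∈ Ioc (x-1) x <;> simp [hg, indicator, hv])]
    rw [MeasureTheory.integral_indicator measurableSet_Ioc,
      ← intervalIntegral.integral_of_le hle]
    simp [smul_eq_mul]
  have key : ∀ N : ℕ, (∫ u in (x-1)..x, psi z u * (Real.sin (2*π*N*u) : ℂ))
      = (𝓕 g (-(N:ℝ)) - 𝓕 g (N:ℝ)) / (2*I) := by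
    intro N
    have hsin : ∀ u : ℝ, psi z u * (Real.sin (2*π*N*u) : ℂ)
        = (Complex.exp ((((-2*π*u*(-(N:ℝ)) : ℝ)):ℂ) * I) * psi z u
            - Complex.exp ((((-2*π*u*((N:ℝ)) : ℝ)):ℂ) * I) * psi z u) / (2*I) := by
      intro u
      have h := exp_sub_exp (2*π*N*u)
      have e1 : (((-2*π*u*(-(N:ℝ)) : ℝ)):ℂ) * I = ((2*π*N*u : ℝ):ℂ) * I := by
        push_cast; ring
      have e2 : (((-2*π*u*((N:ℝ)) : ℝ)):ℂ) * I = -((2*π*N*u : ℝ):ℂ) * I := by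
        push_cast; ring
      rw [e1, e2, ← sub_mul, mul_comm _ (psi z u), h]
      field_simp
    rw [intervalIntegral.integral_congr (fun u _ => hsin u), hF, hF]
    rw [← intervalIntegral.integral_sub, intervalIntegral.integral_div]
    · apply ContinuousOn.intervalIntegrable
      apply ContinuousOn.mul
      · exact (Continuous.continuousOn (by fun_prop))
      · exact (continuousOn_psi z hx0 hx1).mono (by rw [uIcc_of_le hle])
    · apply ContinuousOn.intervalIntegrable
      apply ContinuousOn.mul
      · exact (Continuous.continuousOn (by fun_prop))
      · exact (continuousOn_psi z hx0 hx1).mono (by rw [uIcc_of_le hle])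
  have hRL := Real.zero_at_infty_fourier g
  have h1 : Tendsto (fun N : ℕ => -(N:ℝ)) atTop (Filter.cocompact ℝ) := by
    rw [cocompact_eq_atBot_atTop]
    exact Tendsto.mono_right (tendsto_neg_atTop_atBot.comp tendsto_natCast_atTop_atTop)
      le_sup_left
  have h2 : Tendsto (fun N : ℕ => (N:ℝ)) atTop (Filter.cocompact ℝ) := by
    rw [cocompact_eq_atBot_atTop]
    exact Tendsto.mono_right tendsto_natCast_atTop_atTop le_sup_right
  have := ((hRL.comp h1).sub (hRL.comp h2)).div_const (2*I)
  simp only [Function.comp] at this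
  rw [show ((0:ℂ) - 0)/(2*I) = 0 by ring] at this
  apply this.congr
  intro N
  rw [key N]

lemma key_integral (z : ℂ) {x : ℝ} (hx0 : 0 < x) (hx1 : x < 1) (N : ℕ) (hN : 1 ≤ N) :
    (∫ u in (x-1)..x, Complex.exp (-2*(π:ℂ)*z*u) * ker N u)
      = 1 + ∫ u in (x-1)..x, psi z u * (Real.sin (2*π*N*u) : ℂ) := by
  have hle : x - 1 ≤ x := by linarith
  have h0 : ∀ᵐ u : ℝ, u ≠ 0 := by
    have := compl_mem_ae_iff.mpr (measure_singleton (0:ℝ) (μ := volume))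
    exact this
  have hstep : (∫ u in (x-1)..x, Complex.exp (-2*(π:ℂ)*z*u) * ker N u)
      = ∫ u in (x-1)..x,
          (((1/2+I*z)*Complex.exp ((π:ℂ)*I*u) + (1/2-I*z)*Complex.exp (-((π:ℂ)*I)*u)) * ker N u
            + psi z u * (Real.sin (2*π*N*u) : ℂ)) := by
    apply intervalIntegral.integral_congr_ae
    filter_upwards [h0] with u hu0 hu
    rw [uIoc_of_le hle, mem_Ioc] at hu
    have hsin : Real.sin (π*u) ≠ 0 := by
      have hb1 : -π < π*u := by nlinarith [Real.pi_pos, hu.1]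
      have hb2 : π*u < π := by nlinarith [Real.pi_pos, hu.2]
      rw [ne_eq, Real.sin_eq_zero_iff_of_lt_of_lt hb1 hb2]
      simp [Real.pi_ne_zero, hu0]
    have hpsi : psi z u * (Real.sin (π*u) : ℂ) = rho z u := by
      rw [psi, if_neg hu0, div_mul_cancel₀ _ (Complex.ofReal_ne_zero.mpr hsin)]
    have h1 : Complex.exp (-2*(π:ℂ)*z*u)
        = ((1/2+I*z)*Complex.exp ((π:ℂ)*I*u) + (1/2-I*z)*Complex.exp (-((π:ℂ)*I)*u))
          + rho z u := by
      rw [rho]; ring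
    rw [h1, add_mul]
    congr 1
    rw [← hpsi, mul_assoc, sin_mul_ker]
  have hi1 : IntervalIntegrable (fun u : ℝ =>
      ((1/2+I*z)*Complex.exp ((π:ℂ)*I*u) + (1/2-I*z)*Complex.exp (-((π:ℂ)*I)*u)) * ker N u)
      volume (x-1) x :=
    (((continuous_const.mul (cont_ce _)).add (continuous_const.mul (cont_ce _))).mul
      (ker_cont N)).intervalIntegrable _ _
  have hi2 : IntervalIntegrable (fun u : ℝ => psi z u * (Real.sin (2*π*N*u) : ℂ))
      volume (x-1) x := by
    apply ContinuousOn.intervalIntegrable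
    apply ContinuousOn.mul
    · exact (continuousOn_psi z hx0 hx1).mono (by rw [uIcc_of_le hle])
    · exact (Continuous.continuousOn (by fun_prop))
  rw [hstep, intervalIntegral.integral_add hi1 hi2, integral_trig_ker z x N hN]

lemma sum_eq (z : ℂ) (hz : ∀ n : ℤ, z ≠ ((n : ℂ) + 1/2) * Complex.I)
    (h1E : (1:ℂ) + Complex.exp (2*(π:ℂ)*z) ≠ 0) (x : ℝ) (N : ℕ) :
    (∑ n ∈ Finset.Icc (-(N:ℤ)) ((N:ℤ)-1),
        Complex.exp (2*(π:ℂ)*I*((n:ℂ)+1/2)*(x:ℂ)) / (z - ((n:ℂ)+1/2)*I))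
      = -(2*(π:ℂ)*Complex.exp (2*(π:ℂ)*z*x)/(1+Complex.exp (2*(π:ℂ)*z))) *
          ∫ u in (x-1)..x, Complex.exp (-2*(π:ℂ)*z*u) * ker N u := by
  have hπ : ((π:ℝ):ℂ) ≠ 0 := Complex.ofReal_ne_zero.mpr Real.pi_ne_zero
  have hE : Complex.exp (2*(π:ℂ)*z) ≠ 0 := Complex.exp_ne_zero _
  have hP : Complex.exp (2*(π:ℂ)*z*x) ≠ 0 := Complex.exp_ne_zero _
  have hker : ∀ u : ℝ, Complex.exp (-2*(π:ℂ)*z*u) * ker N u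
      = ∑ n ∈ Finset.Icc (-(N:ℤ)) ((N:ℤ)-1),
          Complex.exp (-2*(π:ℂ)*z*u) * Complex.exp (2*(π:ℂ)*I*((n:ℂ)+1/2)*u) := by
    intro u; rw [ker, Finset.mul_sum]
  rw [intervalIntegral.integral_congr (fun u _ => hker u),
    intervalIntegral.integral_finset_sum
      (fun n _ => ((cont_ce (-2*(π:ℂ)*z)).fun_mul (cont_ce _)).intervalIntegrable _ _),
    Finset.mul_sum]
  apply Finset.sum_congr rfl
  intro n _
  have hzr : z - ((n:ℂ)+1/2)*I ≠ 0 := sub_ne_zero_of_ne (hz n)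
  set c : ℂ := 2*(π:ℂ)*I*((n:ℂ)+1/2) - 2*(π:ℂ)*z with hcdef
  have hceq : c = -(2*(π:ℂ)) * (z - ((n:ℂ)+1/2)*I) := by rw [hcdef]; ring
  have hc : c ≠ 0 := by
    rw [hceq]
    exact mul_ne_zero (by simpa using hπ) hzr
  have hint : (∫ u in (x-1)..x,
      Complex.exp (-2*(π:ℂ)*z*u) * Complex.exp (2*(π:ℂ)*I*((n:ℂ)+1/2)*u))
      = ∫ u in (x-1)..x, Complex.exp (c*u) := by
    apply intervalIntegral.integral_congr
    intro u _
    dsimp only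
    rw [← Complex.exp_add,
      show -2*(π:ℂ)*z*(u:ℂ) + 2*(π:ℂ)*I*((n:ℂ)+1/2)*(u:ℂ) = c*(u:ℂ) from by rw [hcdef]; ring]
  rw [hint, integral_exp_mul_complex hc]
  have hx1e : Complex.exp (c*((x-1:ℝ):ℂ)) = Complex.exp (c*(x:ℂ)) * (-(Complex.exp (2*(π:ℂ)*z))) := by
    rw [show c*((x-1:ℝ):ℂ) = c*(x:ℂ) + (-c) from by push_cast; ring, Complex.exp_add]
    congr 1
    rw [show -c = 2*(π:ℂ)*z + (((-n-1:ℤ)):ℂ)*(2*(π:ℂ)*I) + (π:ℂ)*I from by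
        rw [hcdef]; push_cast; ring,
      Complex.exp_add, Complex.exp_add, Complex.exp_int_mul_two_pi_mul_I, Complex.exp_pi_mul_I]
    ring
  have hsplit : Complex.exp (2*(π:ℂ)*I*((n:ℂ)+1/2)*(x:ℂ))
      = Complex.exp (c*(x:ℂ)) * Complex.exp (2*(π:ℂ)*z*(x:ℂ)) := by
    rw [← Complex.exp_add,
      show c*(x:ℂ) + 2*(π:ℂ)*z*(x:ℂ) = 2*(π:ℂ)*I*((n:ℂ)+1/2)*(x:ℂ) from by rw [hcdef]; ring]
  have key : ∀ (Q P E w : ℂ), w ≠ 0 → (1+E) ≠ 0 →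
      Q*P/w = -(2*(π:ℂ)*P/(1+E)) * ((Q - Q * -E)/(-(2*(π:ℂ))*w)) := by
    intro Q P E w hw h1
    field_simp
    ring
  rw [hx1e, hsplit, hceq]
  exact key _ _ _ _ hzr h1E

end Stmt7Aux

open Stmt7Aux

/-- Partial fraction expansion (Lemma 1.19 of Zwegers): for `b ∈ (-1/2, 1/2)` and
`z ∈ ℂ` not of the form `ir` with `r ∈ ℤ + 1/2`,
`e^{2πbz}/cosh(πz) = -(1/π) Σ_{r∈ℤ+1/2} e^{2πir(b+1/2)}/(z-ir)`,
the sum being a symmetric limit over half-integers `r` with `|r| ≤ N`. -/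
theorem stmt7 (b : ℝ) (hb : b ∈ Set.Ioo (-(1/2) : ℝ) (1/2)) (z : ℂ)
    (hz : ∀ n : ℤ, z ≠ ((n : ℂ) + 1/2) * Complex.I) :
    Tendsto
      (fun N : ℕ =>
        -(1 / (Real.pi : ℂ)) *
          ∑ n ∈ Finset.Icc (-(N : ℤ)) ((N : ℤ) - 1),
            Complex.exp (2 * Real.pi * Complex.I * ((n : ℂ) + 1/2) * ((b : ℂ) + 1/2)) /
              (z - ((n : ℂ) + 1/2) * Complex.I))
      atTop
      (nhds (Complex.exp (2 * Real.pi * (b : ℂ) * z) / Complex.cosh (Real.pi * z))) := by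
  obtain ⟨hb1, hb2⟩ := hb
  set x : ℝ := b + 1/2 with hxdef
  have hx0 : 0 < x := by rw [hxdef]; linarith
  have hx1 : x < 1 := by rw [hxdef]; linarith
  have hxc : ((x:ℝ):ℂ) = (b:ℂ) + 1/2 := by rw [hxdef]; push_cast; ring
  have hπ : ((π:ℝ):ℂ) ≠ 0 := Complex.ofReal_ne_zero.mpr Real.pi_ne_zero
  have h1E : (1:ℂ) + Complex.exp (2*(π:ℂ)*z) ≠ 0 := by
    intro h
    have hexp : Complex.exp (2*(π:ℂ)*z) = Complex.exp ((π:ℂ)*I) := by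
      rw [Complex.exp_pi_mul_I]
      linear_combination h
    rw [Complex.exp_eq_exp_iff_exists_int] at hexp
    obtain ⟨k, hk⟩ := hexp
    apply hz k
    have h2 : 2*(π:ℂ)*z = 2*(π:ℂ)*(((k:ℂ)+1/2)*I) := by rw [hk]; ring
    exact mul_left_cancel₀ (mul_ne_zero two_ne_zero hπ) h2
  have hE2 : Complex.exp (2*(π:ℂ)*z) = Complex.exp ((π:ℂ)*z) * Complex.exp ((π:ℂ)*z) := by
    rw [show 2*(π:ℂ)*z = (π:ℂ)*z + (π:ℂ)*z from by ring, Complex.exp_add]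
  have hcosh : Complex.cosh ((π:ℂ)*z) = (1 + Complex.exp (2*(π:ℂ)*z))/(2*Complex.exp ((π:ℂ)*z)) := by
    have key : Complex.cosh ((π:ℂ)*z)
        = (Complex.exp ((π:ℂ)*z) + Complex.exp (-((π:ℂ)*z)))/2 := by
      have h2c := Complex.two_cosh ((π:ℂ)*z)
      linear_combination h2c/2
    rw [key, Complex.exp_neg, hE2]
    field_simp [Complex.exp_ne_zero]
    ring
  have hcosh_ne : Complex.cosh ((π:ℂ)*z) ≠ 0 := by
    rw [hcosh]
    exact div_ne_zero h1E (by simp [Complex.exp_ne_zero])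
  have hlim := tendsto_psi_sin z hx0 hx1
  have hmain :
      Tendsto (fun N : ℕ => (2*Complex.exp (2*(π:ℂ)*z*x)/(1+Complex.exp (2*(π:ℂ)*z))) *
        (1 + ∫ u in (x-1)..x, psi z u * (Real.sin (2*π*N*u):ℂ))) atTop
        (nhds ((2*Complex.exp (2*(π:ℂ)*z*x)/(1+Complex.exp (2*(π:ℂ)*z))) * (1 + 0))) :=
    (tendsto_const_nhds.add hlim).const_mul _
  have heq : ∀ N : ℕ, 1 ≤ N →
      (-(1 / (Real.pi : ℂ)) *
          ∑ n ∈ Finset.Icc (-(N : ℤ)) ((N : ℤ) - 1),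
            Complex.exp (2 * Real.pi * Complex.I * ((n : ℂ) + 1/2) * ((b : ℂ) + 1/2)) /
              (z - ((n : ℂ) + 1/2) * Complex.I))
        = (2*Complex.exp (2*(π:ℂ)*z*x)/(1+Complex.exp (2*(π:ℂ)*z))) *
            (1 + ∫ u in (x-1)..x, psi z u * (Real.sin (2*π*N*u):ℂ)) := by
    intro N hN
    simp only [← hxc]
    rw [sum_eq z hz h1E x N, key_integral z hx0 hx1 N hN]
    field_simp
  have hval : (2*Complex.exp (2*(π:ℂ)*z*x)/(1+Complex.exp (2*(π:ℂ)*z))) * (1 + 0)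
      = Complex.exp (2 * Real.pi * (b : ℂ) * z) / Complex.cosh (Real.pi * z) := by
    rw [show 2*(π:ℂ)*z*(x:ℂ) = 2*(π:ℂ)*(b:ℂ)*z + (π:ℂ)*z from by rw [hxc]; ring,
      Complex.exp_add, hcosh, hE2]
    have hEne : Complex.exp ((π:ℂ)*z) ≠ 0 := Complex.exp_ne_zero _
    have h1E' : (1:ℂ) + Complex.exp ((π:ℂ)*z) * Complex.exp ((π:ℂ)*z) ≠ 0 := by
      rw [← hE2]; exact h1E
    field_simp
    ring
  rw [hval] at hmain
  apply hmain.congr'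
  filter_upwards [eventually_ge_atTop 1] with N hN
  exact (heq N hN).symm
end
end

section
/- For r ∈ ℝ, r ≠ 0, and τ in the upper half-plane, ∫_{-∞}^{∞} e^{πiτw²}/(w + ir) dw = -πr·∫_{0}^{i∞} e^{πir²z}/√(-i(z+τ)) dz, where the second integral is taken along the positive imaginary axis and √ denotes the principal branch. -/
open Complex MeasureTheory Set Real

/-- elementary exponential integral -/
lemma aux_exp_int {b : ℝ} (hb : 0 < b) :
    ∫ t in Set.Ioi (0 : ℝ), Real.exp (-(b * t)) = 1 / b := by
  have h := MeasureTheory.integral_comp_mul_left_Ioi (fun x => Real.exp (-x)) 0 hb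
  simp only [mul_zero, integral_exp_neg_Ioi_zero, smul_eq_mul, mul_one] at h
  rw [h, one_div]

/-- complex-valued version -/
lemma aux_exp_int' {b : ℝ} (hb : 0 < b) :
    ∫ t in Set.Ioi (0 : ℝ), ((Real.exp (-(b * t)) : ℝ) : ℂ) = ((1 / b : ℝ) : ℂ) := by
  rw [← aux_exp_int hb]
  exact integral_ofReal

/-- Lemma 1.18 of Zwegers: for real `r ≠ 0` and `τ` in the upper half-plane,
`∫_{-∞}^{∞} e^{πiτw²}/(w+ir) dw = -πr ∫_0^{i∞} e^{πir²z}/√(-i(z+τ)) dz`,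
the second integral taken along the positive imaginary axis (`z = it`, `t > 0`),
with the principal branch of the square root. -/
theorem stmt8 (r : ℝ) (hr : r ≠ 0) (τ : ℂ) (hτ : 0 < τ.im) :
    (∫ w : ℝ, Complex.exp (Real.pi * Complex.I * τ * (w : ℂ)^2) / ((w : ℂ) + Complex.I * r))
      = -(Real.pi : ℂ) * r *
        ∫ t in Set.Ioi (0 : ℝ),
          Complex.I * Complex.exp (Real.pi * Complex.I * (r : ℂ)^2 * (Complex.I * t)) /
            (-Complex.I * (Complex.I * t + τ)) ^ ((1 : ℂ)/2) := by
  have hπ : (0:ℝ) < Real.pi := Real.pi_pos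
  set f : ℝ → ℂ := fun w => Complex.exp (Real.pi * Complex.I * τ * (w : ℂ)^2) / ((w : ℂ) + Complex.I * r) with hf_def
  -- basic nonvanishing facts
  have hden : ∀ w : ℝ, ((w : ℂ) + Complex.I * r) ≠ 0 := by
    intro w h
    apply hr
    have := congrArg Complex.im h
    simpa using this
  have hden' : ∀ w : ℝ, (Complex.I * r - (w : ℂ)) ≠ 0 := by
    intro w h
    apply hr
    have := congrArg Complex.im h
    simpa using this
  have hsq : ∀ w : ℝ, ((w : ℂ)^2 + (r : ℂ)^2) ≠ 0 := by
    intro w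
    have : ((w : ℂ)^2 + (r : ℂ)^2) = ((w^2 + r^2 : ℝ) : ℂ) := by push_cast; ring
    rw [this]
    have : (0:ℝ) < w^2 + r^2 := by positivity
    exact_mod_cast this.ne'
  -- integrability of f
  have hgauss : Integrable (fun w : ℝ => Complex.exp (Real.pi * Complex.I * τ * (w : ℂ)^2)) := by
    have hb : (0:ℝ) < (-(Real.pi * Complex.I * τ)).re := by
      simp [Complex.mul_re]
      positivity
    simpa [neg_neg] using integrable_cexp_neg_mul_sq hb
  have hf : Integrable f := by
    have := (hgauss.bdd_mul
      (f := fun w : ℝ => ((w : ℂ) + Complex.I * r)⁻¹) (c := |r|⁻¹) ?_ (Filter.Eventually.of_forall ?_))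
    · exact this.congr (by
        filter_upwards with w
        rw [hf_def]
        simp [div_eq_mul_inv, mul_comm])
    · apply Continuous.aestronglyMeasurable
      exact (Continuous.add Complex.continuous_ofReal continuous_const).inv₀ hden
    · intro w
      rw [norm_inv]
      apply inv_anti₀ (abs_pos.2 hr)
      calc |r| = |((w : ℂ) + Complex.I * r).im| := by simp
        _ ≤ ‖(w : ℂ) + Complex.I * r‖ := Complex.abs_im_le_norm _
  -- symmetrization: I = -I r ∫ exp(πiτw²)/(w²+r²)
  set g : ℝ → ℂ := fun w => Complex.exp (Real.pi * Complex.I * τ * (w : ℂ)^2) / ((w : ℂ)^2 + (r : ℂ)^2) with hg_def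
  have hsym : (2:ℂ) * ∫ w : ℝ, f w = (-2 * Complex.I * r) * ∫ w : ℝ, g w := by
    have h1 : ∫ w : ℝ, f w = ∫ w : ℝ, f (-w) := (integral_neg_eq_self f _).symm
    calc (2:ℂ) * ∫ w : ℝ, f w = (∫ w : ℝ, f w) + ∫ w : ℝ, f (-w) := by rw [← h1]; ring
      _ = ∫ w : ℝ, (f w + f (-w)) := (integral_add hf hf.comp_neg).symm
      _ = ∫ w : ℝ, (-2 * Complex.I * r) * g w := by
          apply integral_congr_ae
          filter_upwards with w
          rw [hf_def, hg_def]
          simp only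
          have h2 : (-(w:ℂ) + Complex.I * r) ≠ 0 := by
            intro h; apply hr
            have := congrArg Complex.im h
            simpa using this
          push_cast
          rw [neg_sq]
          have hprod : ((w:ℂ) + Complex.I * r) * (-(w:ℂ) + Complex.I * r)
              = -((w:ℂ)^2 + (r:ℂ)^2) := by
            linear_combination (r:ℂ)^2 * Complex.I_sq
          rw [div_add_div _ _ (hden w) h2, hprod, div_neg, ← neg_div, ← mul_div_assoc]
          congr 1
          ring
      _ = (-2 * Complex.I * r) * ∫ w : ℝ, g w := integral_const_mul _ _
  have hstep1 : ∫ w : ℝ, f w = (-Complex.I * r) * ∫ w : ℝ, g w := by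
    linear_combination hsym / 2
  -- introduce the parameter integral over t
  set F : ℝ → ℝ → ℂ := fun w t => Complex.exp (Real.pi * Complex.I * τ * (w : ℂ)^2) *
      ((Real.exp (-(Real.pi * (w^2 + r^2) * t)) : ℝ) : ℂ) with hF_def
  have hinner : ∀ w : ℝ, ∫ t in Set.Ioi (0:ℝ), F w t
      = Complex.exp (Real.pi * Complex.I * τ * (w : ℂ)^2) * ((1 / (Real.pi * (w^2 + r^2)) : ℝ) : ℂ) := by
    intro w
    rw [hF_def]
    simp only
    rw [integral_const_mul, aux_exp_int' (by positivity)]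
  have hstep2 : ∫ w : ℝ, g w = (Real.pi : ℂ) * ∫ w : ℝ, ∫ t in Set.Ioi (0:ℝ), F w t := by
    rw [← integral_const_mul]
    apply integral_congr_ae
    filter_upwards with w
    rw [hg_def, hinner w]
    simp only
    have hπc : (Real.pi : ℂ) ≠ 0 := by exact_mod_cast hπ.ne'
    push_cast
    field_simp
  -- Fubini
  have hFmeas : AEStronglyMeasurable (Function.uncurry F)
      ((volume : Measure ℝ).prod ((volume : Measure ℝ).restrict (Set.Ioi 0))) := by
    apply Continuous.aestronglyMeasurable
    rw [hF_def]
    fun_prop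
  have hFint : Integrable (Function.uncurry F)
      ((volume : Measure ℝ).prod ((volume : Measure ℝ).restrict (Set.Ioi 0))) := by
    have hG : Integrable (fun p : ℝ × ℝ =>
        Real.exp (-(Real.pi * τ.im) * p.1^2) * Real.exp (-(Real.pi * r^2) * p.2))
        ((volume : Measure ℝ).prod ((volume : Measure ℝ).restrict (Set.Ioi 0))) :=
      Integrable.mul_prod (integrable_exp_neg_mul_sq (by positivity))
        (exp_neg_integrableOn_Ioi 0 (by positivity))
    apply Integrable.mono' hG hFmeas
    rw [show (volume : Measure ℝ).prod ((volume : Measure ℝ).restrict (Set.Ioi 0))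
        = ((volume : Measure ℝ).prod (volume : Measure ℝ)).restrict (Set.univ ×ˢ Set.Ioi 0) by
      rw [← Measure.prod_restrict, Measure.restrict_univ]]
    refine (ae_restrict_iff' (MeasurableSet.univ.prod measurableSet_Ioi)).2
      (Filter.Eventually.of_forall ?_)
    rintro ⟨w, t⟩ ⟨-, ht⟩
    simp only [Function.uncurry, hF_def]
    rw [norm_mul]
    have h1 : ‖Complex.exp (Real.pi * Complex.I * τ * (w:ℂ)^2)‖
        = Real.exp (-(Real.pi * τ.im) * w^2) := by
      rw [Complex.norm_exp]
      congr 1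
      simp [Complex.mul_re, Complex.mul_im, ← Complex.ofReal_pow]
    have h2 : ‖((Real.exp (-(Real.pi * (w^2 + r^2) * t)) : ℝ) : ℂ)‖
        ≤ Real.exp (-(Real.pi * r^2) * t) := by
      rw [Complex.norm_real, Real.norm_eq_abs, abs_of_pos (Real.exp_pos _)]
      apply Real.exp_le_exp.2
      have ht' : (0:ℝ) ≤ t := (Set.mem_Ioi.1 ht).le
      nlinarith [mul_nonneg (mul_nonneg Real.pi_pos.le (sq_nonneg w)) ht']
    rw [h1]
    exact mul_le_mul_of_nonneg_left h2 (Real.exp_pos _).le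
  have hswap : ∫ w : ℝ, ∫ t in Set.Ioi (0:ℝ), F w t = ∫ t in Set.Ioi (0:ℝ), ∫ w : ℝ, F w t :=
    integral_integral_swap hFint
  -- compute the inner Gaussian integral and simplify
  have hfinal : ∫ t in Set.Ioi (0:ℝ), ∫ w : ℝ, F w t
      = ∫ t in Set.Ioi (0:ℝ),
          Complex.exp (Real.pi * Complex.I * (r : ℂ)^2 * (Complex.I * t)) /
            (-Complex.I * (Complex.I * t + τ)) ^ ((1 : ℂ)/2) := by
    apply setIntegral_congr_fun measurableSet_Ioi
    intro t ht
    show ∫ w : ℝ, F w t = Complex.exp (Real.pi * Complex.I * (r : ℂ)^2 * (Complex.I * t)) /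
        (-Complex.I * (Complex.I * t + τ)) ^ ((1 : ℂ)/2)
    have ht' : (0:ℝ) < t := ht
    have hre : ((t:ℂ) - Complex.I * τ).re = t + τ.im := by
      simp [Complex.sub_re, Complex.mul_re]
    have hb : (0:ℝ) < ((Real.pi : ℂ) * ((t:ℂ) - Complex.I * τ)).re := by
      rw [show ((Real.pi : ℂ) * ((t:ℂ) - Complex.I * τ)).re
          = Real.pi * ((t:ℂ) - Complex.I * τ).re by
        simp [Complex.mul_re]]
      rw [hre]
      positivity
    have hFw : ∀ w : ℝ, F w t = ((Real.exp (-(Real.pi * r^2 * t)) : ℝ) : ℂ) *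
        Complex.exp (-((Real.pi : ℂ) * ((t:ℂ) - Complex.I * τ)) * (w:ℂ)^2) := by
      intro w
      rw [hF_def]
      simp only
      rw [Complex.ofReal_exp, Complex.ofReal_exp, ← Complex.exp_add, ← Complex.exp_add]
      congr 1
      push_cast
      ring
    rw [integral_congr_ae (Filter.Eventually.of_forall hFw), integral_const_mul,
      integral_gaussian_complex hb]
    -- now pure algebra with the square roots
    have hz : ((t:ℂ) - Complex.I * τ).arg ≠ Real.pi := by
      intro h
      have := (Complex.arg_eq_pi_iff.1 h).1
      rw [hre] at this
      nlinarith
    have hπc : (Real.pi : ℂ) ≠ 0 := by exact_mod_cast hπ.ne'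
    have hz0 : ((t:ℂ) - Complex.I * τ) ≠ 0 := by
      intro h
      rw [h] at hre
      simp only [Complex.zero_re] at hre
      nlinarith
    have e1 : (Real.pi : ℂ) * Complex.I * (r:ℂ)^2 * (Complex.I * (t:ℂ))
        = ((-(Real.pi * r^2 * t) : ℝ) : ℂ) := by
      push_cast
      linear_combination ((Real.pi : ℂ) * (r:ℂ)^2 * (t:ℂ)) * Complex.I_sq
    have e2 : -Complex.I * (Complex.I * (t:ℂ) + τ) = ((t:ℂ) - Complex.I * τ) := by
      linear_combination (-(t:ℂ)) * Complex.I_sq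
    have e3 : (Real.pi : ℂ) / ((Real.pi : ℂ) * ((t:ℂ) - Complex.I * τ))
        = ((t:ℂ) - Complex.I * τ)⁻¹ := by
      field_simp
    rw [e1, e2, e3, Complex.inv_cpow _ _ hz, ← Complex.ofReal_exp]
    exact (div_eq_mul_inv _ _).symm
  -- assemble everything
  rw [hstep1, hstep2, hswap, hfinal]
  simp_rw [mul_div_assoc]
  rw [integral_const_mul]
  ring
end
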